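/- Suppose H = ℝⁿ. Let T : H → H be linear and α-averaged with α ∈ (0,1), and let F : H → H be nonexpansive and linear with Fix T ∩ ran F = {0}. Then the operator norm ‖T ∘ F‖ < 1. -/

import Mathlib

set_option maxHeartbeats 1000000 in
/-- In `ℝⁿ`, if `T` is linear and `α`-averaged, `F` is linear nonexpansive, and
`Fix T ∩ ran F = {0}`, then `‖T ∘ F‖ < 1`. -/
theorem opNorm_comp_lt_one {n : ℕ}
    (α : ℝ) (hα : α ∈ Set.Ioo (0 : ℝ) 1)
    (T F : EuclideanSpace ℝ (Fin n) →L[ℝ] EuclideanSpace ℝ (Fin n))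
    (G : EuclideanSpace ℝ (Fin n) → EuclideanSpace ℝ (Fin n))
    (hG : ∀ x y, ‖G x - G y‖ ≤ ‖x - y‖)
    (hT : ∀ x, T x = (1 - α) • x + α • G x)
    (hF : ∀ x, ‖F x‖ ≤ ‖x‖)
    (hFix : {x | T x = x} ∩ Set.range F = {0}) :
    ‖T ∘L F‖ < 1 := by
  obtain ⟨hα0, hα1⟩ := hα
  set A := T ∘L F with hA
  have hG0 : G 0 = 0 := by
    have h0 : T 0 = 0 := map_zero T
    rw [hT 0] at h0
    simp only [smul_zero, zero_add] at h0
    exact (smul_eq_zero.mp h0).resolve_left (ne_of_gt hα0)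
  have hGle : ∀ x : EuclideanSpace ℝ (Fin n), ‖G x‖ ≤ ‖x‖ := fun x => by
    simpa [hG0] using hG x 0
  have hTle : ∀ x : EuclideanSpace ℝ (Fin n), ‖T x‖ ≤ ‖x‖ := fun x => by
    rw [hT]
    calc ‖(1 - α) • x + α • G x‖ ≤ ‖(1 - α) • x‖ + ‖α • G x‖ := norm_add_le _ _
      _ = (1 - α) * ‖x‖ + α * ‖G x‖ := by
          rw [norm_smul, norm_smul, Real.norm_of_nonneg (by linarith),
            Real.norm_of_nonneg (le_of_lt hα0)]
      _ ≤ (1 - α) * ‖x‖ + α * ‖x‖ := by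
          have := hGle x
          nlinarith
      _ = ‖x‖ := by ring
  have hAle : ‖A‖ ≤ 1 := by
    apply ContinuousLinearMap.opNorm_le_bound _ zero_le_one
    intro x
    calc ‖A x‖ = ‖T (F x)‖ := rfl
      _ ≤ ‖F x‖ := hTle _
      _ ≤ ‖x‖ := hF x
      _ = 1 * ‖x‖ := (one_mul _).symm
  rcases Nat.eq_zero_or_pos n with hn | hn
  · subst hn
    have : A = 0 := Subsingleton.elim _ _
    rw [this, norm_zero]
    exact zero_lt_one
  · by_contra hlt
    have hA1 : (1 : ℝ) ≤ ‖A‖ := not_lt.mp hlt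
    have hsne : (Metric.sphere (0 : EuclideanSpace ℝ (Fin n)) 1).Nonempty :=
      ⟨EuclideanSpace.single ⟨0, hn⟩ (1 : ℝ), by
        rw [mem_sphere_zero_iff_norm, EuclideanSpace.norm_single, norm_one]⟩
    obtain ⟨x, hxs, hxm⟩ := (isCompact_sphere (0 : EuclideanSpace ℝ (Fin n)) 1).exists_isMaxOn
      hsne (A.continuous.norm.continuousOn)
    have hx1 : ‖x‖ = 1 := mem_sphere_zero_iff_norm.mp hxs
    have hAx : (1 : ℝ) ≤ ‖A x‖ := by
      refine le_trans hA1 ?_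
      apply ContinuousLinearMap.opNorm_le_of_unit_norm (norm_nonneg _)
      intro z hz
      exact hxm (mem_sphere_zero_iff_norm.mpr hz)
    have hyle : ‖F x‖ ≤ 1 := (hF x).trans_eq hx1
    have hTy : ‖T (F x)‖ = 1 := le_antisymm (le_trans (hTle _) hyle) hAx
    have hy1 : ‖F x‖ = 1 := le_antisymm hyle (le_trans hAx (hTle _))
    have hgle : ‖G (F x)‖ ≤ 1 := (hGle _).trans_eq hy1
    have htle : (inner ℝ (F x) (G (F x)) : ℝ) ≤ ‖G (F x)‖ := by
      calc (inner ℝ (F x) (G (F x)) : ℝ) ≤ ‖F x‖ * ‖G (F x)‖ := real_inner_le_norm _ _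
        _ = ‖G (F x)‖ := by rw [hy1, one_mul]
    have eq1 : 1 = (1 - α) ^ 2 + 2 * (α * (1 - α)) * (inner ℝ (F x) (G (F x)) : ℝ)
        + α ^ 2 * ‖G (F x)‖ ^ 2 := by
      have h := norm_add_sq_real ((1 - α) • (F x)) (α • G (F x))
      rw [← hT (F x), hTy, norm_smul, norm_smul, real_inner_smul_left, real_inner_smul_right,
        Real.norm_of_nonneg (by linarith : (0:ℝ) ≤ 1 - α),
        Real.norm_of_nonneg (le_of_lt hα0), hy1] at h
      nlinarith [h]
    have hg2 : ‖G (F x)‖ ^ 2 ≤ 1 := by nlinarith [norm_nonneg (G (F x))]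
    have key : 2 * α * (1 - α) * (‖G (F x)‖ ^ 2 - 2 * (inner ℝ (F x) (G (F x)) : ℝ) + 1)
        = -2 * α * (1 - ‖G (F x)‖ ^ 2) := by
      linear_combination 2 * eq1
    have hmul : (0 : ℝ) < 2 * α * (1 - α) := by nlinarith
    have hX : ‖G (F x)‖ ^ 2 - 2 * (inner ℝ (F x) (G (F x)) : ℝ) + 1 ≤ 0 := by
      nlinarith [key, hg2, hmul]
    have hGy : G (F x) = F x := by
      have h := norm_sub_sq_real (G (F x)) (F x)
      rw [hy1, real_inner_comm] at h
      have h0 : ‖G (F x) - F x‖ ^ 2 ≤ 0 := by rw [h]; nlinarith [hX]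
      have hz : ‖G (F x) - F x‖ = 0 := by
        have := norm_nonneg (G (F x) - F x)
        nlinarith [h0]
      exact sub_eq_zero.mp (norm_eq_zero.mp hz)
    have hTyy : T (F x) = F x := by
      rw [hT (F x), hGy, ← add_smul]
      norm_num
    have hy0 : F x = 0 := by
      have hmem : F x ∈ ({z | T z = z} ∩ Set.range F : Set (EuclideanSpace ℝ (Fin n))) :=
        ⟨hTyy, ⟨x, rfl⟩⟩
      rw [hFix] at hmem
      exact hmem
    rw [hy0, norm_zero] at hy1
    exact one_ne_zero hy1.symm
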